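/- Let φ : R → Q be an injective ring epimorphism with Q flat as a left R-module. If M is a left R-module such that Ext^1_R(M, D) = 0 for every h-divisible left R-module D, then M has projective dimension at most 1, i.e., Ext^2_R(M, N) = 0 for every left R-module N. -/

import Mathlib

open MulOpposite

universe u

/-- `φ : R →+* Q` is an epimorphism in the category of rings. -/
def IsRingEpi {R Q : Type u} [Ring R] [Ring Q] (φ : R →+* Q) : Prop :=
  ∀ (T : Type u) [Ring T] (ψ ω : Q →+* T), ψ.comp φ = ω.comp φ → ψ = ω

section NCTensor

variable (R : Type u) [Ring R] (M : Type u) [AddCommGroup M] [Module Rᵐᵒᵖ M]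
  (N : Type u) [AddCommGroup N] [Module R N]

/-- Relations defining the tensor product `M ⊗_R N` of a right `R`-module `M`
and a left `R`-module `N` over a (possibly noncommutative) ring `R`. -/
def ncRels : AddSubgroup (FreeAbelianGroup (M × N)) :=
  AddSubgroup.closure
    ({x | ∃ m m' n, x = FreeAbelianGroup.of (m + m', n) - FreeAbelianGroup.of (m, n) -
        FreeAbelianGroup.of (m', n)} ∪
     {x | ∃ m n n', x = FreeAbelianGroup.of (m, n + n') - FreeAbelianGroup.of (m, n) -
        FreeAbelianGroup.of (m, n')} ∪
     {x | ∃ (r : R) (m : M) (n : N), x = FreeAbelianGroup.of (op r • m, n) -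
        FreeAbelianGroup.of (m, r • n)})

/-- The tensor product `M ⊗_R N` of a right `R`-module and a left `R`-module over a
(possibly noncommutative) ring `R`, as an abelian group. -/
def NCTensor : Type u := FreeAbelianGroup (M × N) ⧸ ncRels R M N

instance : AddCommGroup (NCTensor R M N) :=
  QuotientAddGroup.Quotient.addCommGroup _

/-- The pure tensor `m ⊗ n` in `M ⊗_R N`. -/
def NCTensor.tmul (m : M) (n : N) : NCTensor R M N :=
  QuotientAddGroup.mk (FreeAbelianGroup.of (m, n))

end NCTensor

/-- A left `R`-module `N` is flat if tensoring right `R`-modules with `N`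
preserves injectivity. -/
def IsFlatLeftModule (R : Type u) [Ring R] (N : Type u) [AddCommGroup N] [Module R N] : Prop :=
  ∀ (A B : Type u) [AddCommGroup A] [AddCommGroup B] [Module Rᵐᵒᵖ A] [Module Rᵐᵒᵖ B]
    (i : A →ₗ[Rᵐᵒᵖ] B), Function.Injective i →
    ∀ g : NCTensor R A N →+ NCTensor R B N,
      (∀ a n, g (NCTensor.tmul R A N a n) = NCTensor.tmul R B N (i a) n) →
      Function.Injective g

open CategoryTheory in
/-- The Ext group `Ext^n_A(M, N)` for modules over an arbitrary ring `A`,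
computed in the abelian category of `A`-modules. -/
noncomputable abbrev extGroup (A : Type u) [Ring A] (n : ℕ) (M : Type u) [AddCommGroup M]
    [Module A M] (N : Type u) [AddCommGroup N] [Module A N] : Type u :=
  ((Ext ℤ (ModuleCat.{u} A) n).obj (Opposite.op (ModuleCat.of A M))).obj (ModuleCat.of A N)

open CategoryTheory

/-- Postcomposition map between Yoneda complexes. -/
noncomputable def ycMap {A : Type u} [Ring A] (X : ChainComplex (ModuleCat.{u} A) ℕ)
    {Y Y' : ModuleCat.{u} A} (u : Y ⟶ Y') :
    X.linearYonedaObj ℤ Y ⟶ X.linearYonedaObj ℤ Y' where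
  f n := ModuleCat.ofHom (Linear.rightComp ℤ (X.X n) u)
  comm' i j hij := by
    apply ModuleCat.hom_ext
    apply LinearMap.ext
    intro g
    show (X.d j i ≫ (g ≫ u)) = ((X.d j i ≫ g) ≫ u)
    exact (Category.assoc _ _ _).symm

universe v w

lemma subsingletonOfIsZero {S : Type v} [Ring S] {A : ModuleCat.{w} S}
    (h : Limits.IsZero A) : Subsingleton ↑A := by
  constructor
  intro x y
  have h0 : (𝟙 A : A ⟶ A) = 0 := h.eq_of_src _ _
  have hx : ∀ z : ↑A, z = 0 := by
    intro z
    calc z = (𝟙 A : A ⟶ A) z := rfl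
      _ = (0 : A ⟶ A) z := by rw [h0]
      _ = 0 := rfl
  rw [hx x, hx y]

/-- If `φ : R → Q` is an injective ring epimorphism with `Q` flat as a left `R`-module,
and `M` is a left `R`-module with `Ext^1_R(M, D) = 0` for every h-divisible left
`R`-module `D`, then `M` has projective dimension at most 1: `Ext^2_R(M, N) = 0`
for every left `R`-module `N`. -/
theorem perp_hdivisible_pdim_le_one {R Q : Type u} [Ring R] [Ring Q]
    (φ : R →+* Q) (hinj : Function.Injective φ) (hepi : IsRingEpi φ)
    [Module R Q] (hl : ∀ (r : R) (q : Q), r • q = φ r * q)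
    (hflat : IsFlatLeftModule R Q)
    (M : Type u) [AddCommGroup M] [Module R M]
    (hM : ∀ (D : Type u) [AddCommGroup D] [Module R D],
      (∃ (I : Type u) (g : (I →₀ Q) →ₗ[R] D), Function.Surjective g) →
      Subsingleton (extGroup R 1 M D)) :
    ∀ (N : Type u) [AddCommGroup N] [Module R N], Subsingleton (extGroup R 2 M N) := by
  classical
  intro N _ _
  obtain ⟨P⟩ := (HasProjectiveResolution.out (Z := ModuleCat.of R M))
  set X := P.complex with hX
  -- injective embedding of N
  set N' : ModuleCat.{u} R := ModuleCat.of R N with hN'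
  set E : ModuleCat.{u} R := Injective.under N' with hE
  set ι : N' ⟶ E := Injective.ι N' with hι
  have hinjι : Function.Injective ι := (ModuleCat.mono_iff_injective ι).mp inferInstance
  haveI : CategoryTheory.Injective (ModuleCat.of R ↑E) := by
    rw [ModuleCat.of_coe]; infer_instance
  haveI hQE : Module.Injective R ↑E := Module.injective_module_of_injective_object R ↑E
  -- E is h-divisible
  set ι₀ : R →ₗ[R] Q :=
    { toFun := φ
      map_add' := fun a b => map_add φ a b
      map_smul' := fun r s => by simp [smul_eq_mul, map_mul, hl] } with hι₀
  have hdiv : ∀ e : ↑E, ∃ fe : Q →ₗ[R] ↑E, fe (φ 1) = e := by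
    intro e
    obtain ⟨fe, hfe⟩ := Module.Injective.extension_property R ↑E R Q ι₀ hinj
      (LinearMap.toSpanSingleton R ↑E e)
    refine ⟨fe, ?_⟩
    have h1 : fe (ι₀ 1) = (1 : R) • e := by
      simpa using LinearMap.congr_fun hfe 1
    rw [one_smul] at h1
    exact h1
  set g0 : (↑E →₀ Q) →ₗ[R] ↑E := Finsupp.lsum ℕ (fun e => (hdiv e).choose) with hg0
  have hg0surj : Function.Surjective g0 := by
    intro e
    exact ⟨Finsupp.single e (φ 1), by simpa [hg0] using (hdiv e).choose_spec⟩
  -- the quotient D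
  set K : Submodule R ↑E := LinearMap.range ι.hom with hK
  set D : Type u := ↑E ⧸ K with hD
  set π : E ⟶ ModuleCat.of R D := ModuleCat.ofHom K.mkQ with hπ
  set S' : ShortComplex (ModuleCat.{u} R) := ShortComplex.mk ι π (by
    ext x
    show K.mkQ (ι x) = 0
    rw [Submodule.mkQ_apply, Submodule.Quotient.mk_eq_zero]
    exact ⟨x, rfl⟩) with hS'def
  haveI : Mono S'.f := (ModuleCat.mono_iff_injective _).mpr hinjι
  haveI : Epi S'.g := (ModuleCat.epi_iff_surjective _).mpr (Submodule.mkQ_surjective K)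
  have hS' : S'.ShortExact := by
    refine ShortComplex.ShortExact.mk ?_
    rw [ShortComplex.moduleCat_exact_iff]
    intro x hx
    have : x ∈ K := by
      rwa [show S'.g x = K.mkQ x from rfl, Submodule.mkQ_apply,
        Submodule.Quotient.mk_eq_zero] at hx
    exact this
  -- D is h-divisible
  have hsub1 : Subsingleton (extGroup R 1 M D) := by
    refine hM D ⟨↑E, K.mkQ.comp g0, ?_⟩
    exact (Submodule.mkQ_surjective K).comp hg0surj
  -- the short exact sequence of Hom complexes
  set T : ShortComplex (CochainComplex (ModuleCat.{u} ℤ) ℕ) :=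
    ShortComplex.mk (ycMap X S'.f) (ycMap X S'.g) (by
      apply HomologicalComplex.hom_ext
      intro n
      apply ModuleCat.hom_ext
      apply LinearMap.ext
      intro g
      change (X.X n ⟶ S'.X₁) at g
      show (g ≫ S'.f) ≫ S'.g = ((0 : X.linearYonedaObj ℤ S'.X₁ ⟶ X.linearYonedaObj ℤ S'.X₃).f n) g
      rw [Category.assoc, S'.zero, Limits.comp_zero]
      rfl) with hTdef
  have hTn : ∀ n : ℕ,
      (T.map (HomologicalComplex.eval (ModuleCat.{u} ℤ) (ComplexShape.up ℕ) n)).ShortExact := by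
    intro n
    haveI : Mono (T.map (HomologicalComplex.eval (ModuleCat.{u} ℤ) (ComplexShape.up ℕ) n)).f := by
      refine (ModuleCat.mono_iff_injective _).mpr ?_
      intro g g' hgg
      exact (cancel_mono S'.f).mp hgg
    haveI : Epi (T.map (HomologicalComplex.eval (ModuleCat.{u} ℤ) (ComplexShape.up ℕ) n)).g := by
      refine (ModuleCat.epi_iff_surjective _).mpr ?_
      intro h
      obtain ⟨l, hl⟩ := Projective.factors h S'.g
      exact ⟨l, hl⟩
    refine ShortComplex.ShortExact.mk ?_
    rw [ShortComplex.moduleCat_exact_iff]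
    intro g hg
    change (X.X n ⟶ S'.X₂) at g
    have hg' : (g ≫ S'.g : X.X n ⟶ S'.X₃) = 0 := hg
    have hmem : ∀ x, g x ∈ K := by
      intro x
      have h0 : S'.g (g x) = 0 := by
        have := LinearMap.congr_fun (congrArg ModuleCat.Hom.hom hg') x
        simpa using this
      rwa [show S'.g (g x) = K.mkQ (g x) from rfl, Submodule.mkQ_apply,
        Submodule.Quotient.mk_eq_zero] at h0
    set eqv := LinearEquiv.ofInjective ι.hom hinjι with heqv
    refine ⟨ModuleCat.ofHom ((eqv.symm.toLinearMap).comp (LinearMap.codRestrict K g.hom hmem)), ?_⟩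
    apply ModuleCat.hom_ext
    apply LinearMap.ext
    intro x
    show ι (eqv.symm ⟨g x, hmem x⟩) = g x
    have h2 : ι.hom (eqv.symm ⟨g x, hmem x⟩)
        = ((eqv (eqv.symm ⟨g x, hmem x⟩)) : ↑E) :=
      (LinearEquiv.ofInjective_apply _ _).symm
    rw [h2, eqv.apply_symm_apply]
  have hT : T.ShortExact := HomologicalComplex.shortExact_of_degreewise_shortExact T hTn
  -- the complex Hom(P, E) is exact in degree 2 since E is injective
  have hE2 : Limits.IsZero ((X.linearYonedaObj ℤ E).homology 2) := by
    rw [← HomologicalComplex.exactAt_iff_isZero_homology]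
    rw [HomologicalComplex.exactAt_iff' _ 1 2 3 (by simp) (by simp)]
    rw [ShortComplex.moduleCat_exact_iff]
    intro h hh
    change (X.X 2 ⟶ E) at h
    have hh' : (X.d 3 2 ≫ h : X.X 3 ⟶ E) = 0 := hh
    have hPex : ∀ x : ↑(X.X 2), (X.d 2 1).hom x = 0 →
        ∃ y, (X.d 3 2).hom y = x := by
      have hex := P.complex_exactAt_succ 1
      rw [HomologicalComplex.exactAt_iff' _ 3 2 1 (by simp) (by simp),
        ShortComplex.moduleCat_exact_iff] at hex
      exact fun x hx => hex x hx
    set d21 : ↑(X.X 2) →ₗ[R] ↑(X.X 1) := (X.d 2 1).hom with hd21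
    have hker : LinearMap.ker d21 ≤ LinearMap.ker h.hom := by
      intro x hx
      obtain ⟨y, rfl⟩ := hPex x hx
      have := LinearMap.congr_fun (congrArg ModuleCat.Hom.hom hh') y
      simpa using this
    set f1 := Submodule.liftQ (LinearMap.ker d21) h.hom hker with hf1
    set i0 : (↑(X.X 2) ⧸ LinearMap.ker d21) →ₗ[R] ↑(X.X 1) :=
      (LinearMap.range d21).subtype.comp d21.quotKerEquivRange.toLinearMap with hi0def
    have hi0 : Function.Injective i0 :=
      (Submodule.injective_subtype _).comp d21.quotKerEquivRange.injective
    obtain ⟨k, hk⟩ := Module.Injective.extension_property R ↑E _ _ i0 hi0 f1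
    refine ⟨ModuleCat.ofHom k, ?_⟩
    show (X.d 2 1 ≫ ModuleCat.ofHom k : X.X 2 ⟶ E) = h
    apply ModuleCat.hom_ext
    apply LinearMap.ext
    intro x
    have e1 : i0 (Submodule.Quotient.mk x) = d21 x := by
      show ((d21.quotKerEquivRange (Submodule.Quotient.mk x)) : ↑(X.X 1)) = d21 x
      rw [LinearMap.quotKerEquivRange_apply_mk]
    have e2 := LinearMap.congr_fun hk (Submodule.Quotient.mk x)
    show k (d21 x) = h x
    rw [← e1]
    exact e2.trans (Submodule.liftQ_apply _ _ _)
  -- the complex Hom(P, D) has vanishing H^1 since D is h-divisible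
  have hD1 : Limits.IsZero ((X.linearYonedaObj ℤ (ModuleCat.of R D)).homology 1) := by
    haveI := hsub1
    exact Limits.IsZero.of_iso (ModuleCat.isZero_of_subsingleton _)
      (P.isoExt 1 (ModuleCat.of R D)).symm
  -- conclude via the long exact sequence
  have hexact := hT.homology_exact₁ 1 2 (by simp)
  have hzero : Limits.IsZero (HomologicalComplex.homology T.X₁ 2) := by
    apply hexact.isZero_X₂
    · exact hD1.eq_of_src _ _
    · exact hE2.eq_of_tgt _ _
  have hiso := P.isoExt (R := ℤ) 2 (ModuleCat.of R N)
  have hzero' : Limits.IsZero ((X.linearYonedaObj ℤ (ModuleCat.of R N)).homology 2) := hzero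
  have hExtZero : Limits.IsZero (((Ext ℤ (ModuleCat.{u} R) 2).obj
      (Opposite.op (ModuleCat.of R M))).obj (ModuleCat.of R N)) :=
    Limits.IsZero.of_iso hzero' hiso
  exact subsingletonOfIsZero (S := ℤ)
    (A := ((Ext ℤ (ModuleCat.{u} R) 2).obj (Opposite.op (ModuleCat.of R M))).obj
      (ModuleCat.of R N)) hExtZero
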